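/- Let f : ℝⁿ → ℝ be convex and differentiable, with componentwise Lipschitz constants L₁,…,Lₙ > 0 and parameters L̄ᵢ ≥ Lᵢ, let p₁,…,pₙ be probabilities with pᵢ ≥ p_min > 0 and ∑pᵢ = 1, let x̄ be a minimizer of f with f* = f(x̄), and define r(x)² = ∑_{i=1}^n (L̄ᵢ/pᵢ)(xᵢ − x̄ᵢ)². Then for any x ∈ ℝⁿ, with x⁽ⁱ⁾ = x − (∇ᵢf(x)/L̄ᵢ) eᵢ for each i, the single-step averaged inequality holds: ∑_{i=1}^n pᵢ r(x⁽ⁱ⁾)² − r(x)² ≤ (2/p_min)( f(x) − ∑_{i=1}^n pᵢ f(x⁽ⁱ⁾) ) + 2( f* − f(x) ). -/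

import Mathlib

open Set Finset

private lemma quad_upper (φ φ' : ℝ → ℝ) (L : ℝ)
    (hd : ∀ t, HasDerivAt φ (φ' t) t)
    (hlip : ∀ t, |φ' t - φ' 0| ≤ L * |t|) (T : ℝ) :
    φ T ≤ φ 0 + φ' 0 * T + L / 2 * T ^ 2 := by
  set h : ℝ → ℝ := fun t => φ 0 + φ' 0 * t + L / 2 * t ^ 2 - φ t with hh_def
  have hh : ∀ t, HasDerivAt h (φ' 0 + L * t - φ' t) t := by
    intro t
    have h1 : HasDerivAt (fun s : ℝ => φ 0 + φ' 0 * s + L / 2 * s ^ 2)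
        (φ' 0 + L * t) t := by
      have ha := ((hasDerivAt_id t).const_mul (φ' 0)).const_add (φ 0)
      have hb := (hasDerivAt_pow 2 t).const_mul (L / 2)
      convert ha.add hb using 1
      · rfl
      · rfl
      · rfl
      · ring
    exact h1.sub (hd t)
  have hdiff : Differentiable ℝ h := fun t => (hh t).differentiableAt
  have hcont : Continuous h := hdiff.continuous
  have hderiv_eq : ∀ t, deriv h t = φ' 0 + L * t - φ' t := fun t => (hh t).deriv
  have h0 : h 0 = 0 := by simp [hh_def]
  have key : 0 ≤ h T := by
    rcases le_or_gt 0 T with hT | hT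
    · have hmono : MonotoneOn h (Icc 0 T) := by
        apply monotoneOn_of_deriv_nonneg (convex_Icc 0 T) hcont.continuousOn
          hdiff.differentiableOn
        intro t ht
        rw [interior_Icc] at ht
        rw [hderiv_eq]
        have := hlip t
        rw [abs_of_pos ht.1] at this
        have := abs_le.mp this
        linarith [this.2]
      have := hmono (left_mem_Icc.mpr hT) (right_mem_Icc.mpr hT) hT
      linarith [h0 ▸ this]
    · have hanti : AntitoneOn h (Icc T 0) := by
        apply antitoneOn_of_deriv_nonpos (convex_Icc T 0) hcont.continuousOn
          hdiff.differentiableOn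
        intro t ht
        rw [interior_Icc] at ht
        rw [hderiv_eq]
        have := hlip t
        rw [abs_of_neg ht.2] at this
        have := abs_le.mp this
        linarith [this.1]
      have := hanti (left_mem_Icc.mpr hT.le) (right_mem_Icc.mpr hT.le) hT.le
      linarith [h0 ▸ this]
  simpa [hh_def] using key

private lemma line_hasDerivAt {n : ℕ} (f : EuclideanSpace ℝ (Fin n) → ℝ)
    (f' : EuclideanSpace ℝ (Fin n) → EuclideanSpace ℝ (Fin n))
    (hderiv : ∀ y, HasGradientAt f (f' y) y)
    (c v : EuclideanSpace ℝ (Fin n)) (t : ℝ) :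
    HasDerivAt (fun s : ℝ => f (c + s • v)) (inner ℝ (f' (c + t • v)) v : ℝ) t := by
  have hline : HasDerivAt (fun s : ℝ => c + s • v) v t := by
    simpa using ((hasDerivAt_id t).smul_const v).const_add c
  have hf := (hderiv (c + t • v)).hasFDerivAt
  have hc := hf.comp_hasDerivAt t hline
  simp at hc
  exact hc

private lemma grad_convex_ineq {n : ℕ} (f : EuclideanSpace ℝ (Fin n) → ℝ)
    (f' : EuclideanSpace ℝ (Fin n) → EuclideanSpace ℝ (Fin n))
    (hconv : ConvexOn ℝ Set.univ f)
    (hderiv : ∀ y, HasGradientAt f (f' y) y)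
    (x y : EuclideanSpace ℝ (Fin n)) :
    (inner ℝ (f' x) (y - x) : ℝ) ≤ f y - f x := by
  set A : ℝ →ᵃ[ℝ] EuclideanSpace ℝ (Fin n) := AffineMap.lineMap x y with hA
  have hAapp : ∀ t : ℝ, A t = x + t • (y - x) := by
    intro t
    simp [hA, AffineMap.lineMap_apply]
    module
  have hφconv : ConvexOn ℝ Set.univ (f ∘ A) := by
    have := hconv.comp_affineMap A
    simpa using this
  have hφd : HasDerivAt (f ∘ A) (inner ℝ (f' x) (y - x) : ℝ) 0 := by
    have := line_hasDerivAt f f' hderiv x (y - x) 0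
    simp only [zero_smul, add_zero] at this
    have heq : (f ∘ A) = fun s : ℝ => f (x + s • (y - x)) := by
      funext s; simp [hAapp]
    rw [heq]; exact this
  have := hφconv.le_slope_of_hasDerivAt (mem_univ (0:ℝ)) (mem_univ (1:ℝ))
    zero_lt_one hφd
  rw [slope_def_field] at this
  have h0 : (f ∘ A) 0 = f x := by simp [hAapp]
  have h1 : (f ∘ A) 1 = f y := by
    simp only [Function.comp_apply, hAapp]; norm_num
  rw [h0, h1] at this
  simpa using this

private lemma coord_descent_step {n : ℕ} (f : EuclideanSpace ℝ (Fin n) → ℝ)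
    (f' : EuclideanSpace ℝ (Fin n) → EuclideanSpace ℝ (Fin n))
    (hderiv : ∀ y, HasGradientAt f (f' y) y)
    (Li : Fin n → ℝ) (hLi : ∀ i, 0 < Li i)
    (hcoordlip : ∀ (y : EuclideanSpace ℝ (Fin n)) (i : Fin n) (h : ℝ),
      |f' (y + h • EuclideanSpace.single i 1) i - f' y i| ≤ Li i * |h|)
    (Lbar : Fin n → ℝ) (hLbar : ∀ i, Li i ≤ Lbar i)
    (x : EuclideanSpace ℝ (Fin n)) (i : Fin n) :
    f (x - (f' x i / Lbar i) • EuclideanSpace.single i 1) ≤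
      f x - (f' x i) ^ 2 / (2 * Lbar i) := by
  have hLpos : 0 < Lbar i := lt_of_lt_of_le (hLi i) (hLbar i)
  set E := EuclideanSpace.single (𝕜 := ℝ) i 1 with hE
  set φ : ℝ → ℝ := fun s => f (x + s • E) with hφ
  set d : ℝ → ℝ := fun s => f' (x + s • E) i with hd_def
  have hd : ∀ t, HasDerivAt φ (d t) t := by
    intro t
    have := line_hasDerivAt f f' hderiv x E t
    have hinner : (inner ℝ (f' (x + t • E)) E : ℝ) = d t := by
      simp [hE, hd_def, EuclideanSpace.inner_single_right]
    rwa [hinner] at this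
  have hd0 : d 0 = f' x i := by simp [hd_def]
  have hlip : ∀ t, |d t - d 0| ≤ Li i * |t| := by
    intro t
    rw [hd0]
    exact hcoordlip x i t
  have hquad := quad_upper φ d (Li i) hd hlip (-(f' x i / Lbar i))
  rw [hd0] at hquad
  have hpt : x + (-(f' x i / Lbar i)) • E = x - (f' x i / Lbar i) • E := by
    module
  have hφ0 : φ 0 = f x := by simp [hφ]
  rw [hφ] at hquad
  simp only [hpt] at hquad
  simp only [zero_smul, add_zero] at hquad
  calc f (x - (f' x i / Lbar i) • E) ≤
      f x + f' x i * (-(f' x i / Lbar i)) + Li i / 2 * (-(f' x i / Lbar i)) ^ 2 := hquad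
    _ ≤ f x - (f' x i) ^ 2 / (2 * Lbar i) := by
        have hL0 : Lbar i ≠ 0 := ne_of_gt hLpos
        have hsub : (f x - f' x i ^ 2 / (2 * Lbar i)) -
            (f x + f' x i * -(f' x i / Lbar i) + Li i / 2 * (-(f' x i / Lbar i)) ^ 2)
            = (Lbar i - Li i) * (f' x i) ^ 2 / (2 * Lbar i ^ 2) := by
          field_simp
          ring
        have hnn : 0 ≤ (Lbar i - Li i) * (f' x i) ^ 2 / (2 * Lbar i ^ 2) := by
          apply div_nonneg
          · exact mul_nonneg (by linarith [hLbar i]) (sq_nonneg _)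
          · positivity
        linarith [hsub ▸ hnn]


/-- Single-step averaged inequality for stochastic coordinate
descent: with `r(x)² = ∑ᵢ (L̄ᵢ/pᵢ)(xᵢ − x̄ᵢ)²` and coordinate updates
`x⁽ⁱ⁾ = x − (∇ᵢf(x)/L̄ᵢ) eᵢ`, we have
`∑ᵢ pᵢ r(x⁽ⁱ⁾)² − r(x)² ≤ (2/p_min)(f(x) − ∑ᵢ pᵢ f(x⁽ⁱ⁾)) + 2(f* − f(x))`. -/
theorem coordinate_descent_one_step_bound
    {n : ℕ}
    (f : EuclideanSpace ℝ (Fin n) → ℝ)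
    (f' : EuclideanSpace ℝ (Fin n) → EuclideanSpace ℝ (Fin n))
    (hconv : ConvexOn ℝ Set.univ f)
    (hderiv : ∀ y, HasGradientAt f (f' y) y)
    (Li : Fin n → ℝ) (hLi : ∀ i, 0 < Li i)
    (hcoordlip : ∀ (y : EuclideanSpace ℝ (Fin n)) (i : Fin n) (h : ℝ),
      |f' (y + h • EuclideanSpace.single i 1) i - f' y i| ≤ Li i * |h|)
    (Lbar : Fin n → ℝ) (hLbar : ∀ i, Li i ≤ Lbar i)
    (xbar : EuclideanSpace ℝ (Fin n)) (hxbar : ∀ y, f xbar ≤ f y)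
    (p : Fin n → ℝ) (pmin : ℝ) (hpmin : 0 < pmin)
    (hp : ∀ i, pmin ≤ p i) (hpsum : ∑ i, p i = 1)
    (R : EuclideanSpace ℝ (Fin n) → ℝ)
    (hR : ∀ z, R z = ∑ i, Lbar i / p i * (z i - xbar i) ^ 2)
    (x : EuclideanSpace ℝ (Fin n))
    (xi : Fin n → EuclideanSpace ℝ (Fin n))
    (hxi : ∀ i, xi i = x - (f' x i / Lbar i) • EuclideanSpace.single i 1) :
    ∑ i, p i * R (xi i) - R x ≤
      2 / pmin * (f x - ∑ i, p i * f (xi i)) + 2 * (f xbar - f x) := by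
  have hLpos : ∀ i, 0 < Lbar i := fun i => lt_of_lt_of_le (hLi i) (hLbar i)
  have hppos : ∀ i, 0 < p i := fun i => lt_of_lt_of_le hpmin (hp i)
  -- descent along each coordinate
  have hdesc : ∀ i, f (xi i) ≤ f x - (f' x i) ^ 2 / (2 * Lbar i) := by
    intro i
    rw [hxi]
    exact coord_descent_step f f' hderiv Li hLi hcoordlip Lbar hLbar x i
  -- coordinates of xi i
  have hcoord : ∀ i j, xi i j = if j = i then x i - f' x i / Lbar i else x j := by
    intro i j
    rw [hxi]
    rw [PiLp.sub_apply, PiLp.smul_apply, EuclideanSpace.single_apply]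
    by_cases h : j = i
    · subst h; simp
    · simp [h]
  -- difference of R
  have hRdiff : ∀ i, R (xi i) - R x =
      Lbar i / p i * ((x i - f' x i / Lbar i - xbar i) ^ 2 - (x i - xbar i) ^ 2) := by
    intro i
    rw [hR, hR, ← Finset.sum_sub_distrib]
    rw [Finset.sum_eq_single i]
    · rw [hcoord i i]
      simp [mul_sub]
    · intro j _ hji
      rw [hcoord i j]
      simp [hji]
    · intro h
      exact absurd (Finset.mem_univ i) h
  -- per-coordinate inequality
  have key : ∀ i, p i * R (xi i) - p i * R x ≤
      2 / pmin * (p i * f x - p i * f (xi i)) + 2 * (f' x i * (xbar i - x i)) := by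
    intro i
    have hdiffval : p i * R (xi i) - p i * R x =
        -2 * (f' x i * (x i - xbar i)) + (f' x i) ^ 2 / Lbar i := by
      have := hRdiff i
      have hpne : p i ≠ 0 := ne_of_gt (hppos i)
      have hLne : Lbar i ≠ 0 := ne_of_gt (hLpos i)
      have : p i * (R (xi i) - R x) =
          -2 * (f' x i * (x i - xbar i)) + (f' x i) ^ 2 / Lbar i := by
        rw [this]
        field_simp
        ring
      linarith [this]
    rw [hdiffval]
    -- suffices: (f' x i)^2 / Lbar i ≤ 2/pmin * (p i * (f x - f (xi i)))
    have he : (f' x i) ^ 2 / (2 * Lbar i) ≤ f x - f (xi i) := by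
      linarith [hdesc i]
    have hLne : Lbar i ≠ 0 := ne_of_gt (hLpos i)
    have he0 : 0 ≤ f x - f (xi i) :=
      le_trans (div_nonneg (sq_nonneg _) (by linarith [hLpos i])) he
    have hfactor : (2 : ℝ) ≤ 2 / pmin * p i := by
      rw [div_mul_eq_mul_div, le_div_iff₀ hpmin]
      linarith [hp i]
    have hmain : (f' x i) ^ 2 / Lbar i ≤ 2 / pmin * (p i * f x - p i * f (xi i)) := by
      have h1 : (f' x i) ^ 2 / Lbar i = 2 * ((f' x i) ^ 2 / (2 * Lbar i)) := by
        field_simp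
      have h2 : 2 * (f x - f (xi i)) ≤ 2 / pmin * p i * (f x - f (xi i)) :=
        mul_le_mul_of_nonneg_right hfactor he0
      have h3 : 2 / pmin * p i * (f x - f (xi i)) =
          2 / pmin * (p i * f x - p i * f (xi i)) := by ring
      linarith [h1 ▸ (le_trans (by linarith : (f' x i) ^ 2 / Lbar i ≤ 2 * (f x - f (xi i))) (h3 ▸ h2))]
    linarith
  -- sum up
  have hsum := Finset.sum_le_sum (fun i (_ : i ∈ Finset.univ) => key i)
  rw [Finset.sum_sub_distrib, ← Finset.sum_mul, hpsum, one_mul] at hsum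
  rw [Finset.sum_add_distrib, ← Finset.mul_sum, Finset.sum_sub_distrib,
    ← Finset.mul_sum] at hsum
  -- convexity bound on the gradient term
  have hgrad : ∑ j, f' x j * (xbar j - x j) ≤ f xbar - f x := by
    have := grad_convex_ineq f f' hconv hderiv x xbar
    rw [PiLp.inner_apply] at this
    simpa [PiLp.sub_apply, starRingEnd_apply, mul_comm] using this
  have hfx : ∑ i, p i * f x = f x := by
    rw [← Finset.sum_mul, hpsum, one_mul]
  rw [hfx] at hsum
  calc ∑ i, p i * R (xi i) - R x
      ≤ 2 / pmin * (f x - ∑ i, p i * f (xi i))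
        + 2 * ∑ j, f' x j * (xbar j - x j) := hsum
    _ ≤ 2 / pmin * (f x - ∑ i, p i * f (xi i)) + 2 * (f xbar - f x) := by
        linarith [hgrad]
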